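/- Let n ≥ 1 and let S_n be the star graph with vertex set {0,1,...,n-1} and edges {0,i} for 1 ≤ i ≤ n-1. A partial transformation α of {0,1,...,n-1} is a partial weak endomorphism of S_n if and only if one of the following holds: (1) 0 ∉ dom(α); (2) 0 ∈ dom(α) and 0α = 0; (3) 0 ∈ dom(α), 0α ≠ 0, and im(α) ⊆ {0, 0α}. -/

import Mathlib

def pmul {V : Type*} (f g : V → Option V) : V → Option V := fun x => (f x).bind g

def pdom {V : Type*} (f : V → Option V) : Set V := {x | f x ≠ none}

def pim {V : Type*} (f : V → Option V) : Set V := {y | ∃ x, f x = some y}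

def pker {V : Type*} (f : V → Option V) : V → V → Prop := fun x y => f x ≠ none ∧ f x = f y

def PInj {V : Type*} (f : V → Option V) : Prop := ∀ u v a, f u = some a → f v = some a → u = v

def edge {n : ℕ} (u v : Fin n) : Prop := (u.val = 0 ∧ v.val ≠ 0) ∨ (v.val = 0 ∧ u.val ≠ 0)

def IsPEnd {n : ℕ} (α : Fin n → Option (Fin n)) : Prop :=
  ∀ u v a b, α u = some a → α v = some b → edge u v → edge a b

def IsPwEnd {n : ℕ} (α : Fin n → Option (Fin n)) : Prop :=
  ∀ u v a b, α u = some a → α v = some b → edge u v → a ≠ b → edge a b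

def IsPsEnd {n : ℕ} (α : Fin n → Option (Fin n)) : Prop :=
  ∀ u v a b, α u = some a → α v = some b → (edge u v ↔ edge a b)

def IsPswEnd {n : ℕ} (α : Fin n → Option (Fin n)) : Prop :=
  ∀ u v a b, α u = some a → α v = some b → ((edge u v ∧ a ≠ b) ↔ edge a b)

def PEndS (n : ℕ) : Set (Fin n → Option (Fin n)) := {α | IsPEnd α}
def PwEndS (n : ℕ) : Set (Fin n → Option (Fin n)) := {α | IsPwEnd α}
def PsEndS (n : ℕ) : Set (Fin n → Option (Fin n)) := {α | IsPsEnd α}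
def PswEndS (n : ℕ) : Set (Fin n → Option (Fin n)) := {α | IsPswEnd α}
def IEndS (n : ℕ) : Set (Fin n → Option (Fin n)) := {α | PInj α ∧ IsPEnd α}
def PAutS (n : ℕ) : Set (Fin n → Option (Fin n)) := {α | PInj α ∧ IsPsEnd α}

def RegularIn {V : Type*} (M : Set (V → Option V)) (a : V → Option V) : Prop :=
  ∃ b ∈ M, pmul (pmul a b) a = a

def GreenL {V : Type*} (M : Set (V → Option V)) (a b : V → Option V) : Prop :=
  (∃ g ∈ M, a = pmul g b) ∧ (∃ g ∈ M, b = pmul g a)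

def GreenR {V : Type*} (M : Set (V → Option V)) (a b : V → Option V) : Prop :=
  (∃ g ∈ M, a = pmul b g) ∧ (∃ g ∈ M, b = pmul a g)

def GreenH {V : Type*} (M : Set (V → Option V)) (a b : V → Option V) : Prop :=
  GreenL M a b ∧ GreenR M a b

def GreenJ {V : Type*} (M : Set (V → Option V)) (a b : V → Option V) : Prop :=
  (∃ g ∈ M, ∃ h ∈ M, a = pmul (pmul g b) h) ∧ (∃ g ∈ M, ∃ h ∈ M, b = pmul (pmul g a) h)

theorem stmt0 (n : ℕ) (hn : 1 ≤ n) (α : Fin n → Option (Fin n)) :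
    IsPwEnd α ↔
      ((⟨0, hn⟩ : Fin n) ∉ pdom α
        ∨ α ⟨0, hn⟩ = some ⟨0, hn⟩
        ∨ (∃ a : Fin n, α ⟨0, hn⟩ = some a ∧ a ≠ ⟨0, hn⟩
            ∧ pim α ⊆ {(⟨0, hn⟩ : Fin n), a})) := by
  set z : Fin n := ⟨0, hn⟩ with hz
  have hval : ∀ u : Fin n, u.val = 0 ↔ u = z := by
    intro u; constructor
    · intro h; exact Fin.ext h
    · intro h; rw [h]
  constructor
  · intro hα
    cases hαz : α z with
    | none => exact Or.inl (by simp [pdom, hαz])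
    | some a =>
      by_cases ha : a = z
      · exact Or.inr (Or.inl (congrArg some ha))
      · refine Or.inr (Or.inr ⟨a, rfl, ha, ?_⟩)
        rintro b ⟨u, hu⟩
        by_cases huz : u = z
        · right; rw [huz, hαz] at hu; exact (Option.some_inj.mp hu).symm
        · by_cases hba : b = a
          · right; exact hba
          · left
            have he : edge u z := Or.inr ⟨rfl, fun h => huz ((hval u).mp h)⟩
            have := hα u z b a hu hαz he hba
            rcases this with ⟨h1, h2⟩ | ⟨h1, h2⟩
            · exact (hval b).mp h1
            · exact absurd ((hval a).mp h1) ha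
  · intro h u v a b hu hv huv hab
    have hedge : ∀ (c : Fin n), c ≠ z → edge z c := fun c hc =>
      Or.inl ⟨rfl, fun h => hc ((hval c).mp h)⟩
    have hedge' : ∀ (c : Fin n), c ≠ z → edge c z := fun c hc =>
      Or.inr ⟨rfl, fun h => hc ((hval c).mp h)⟩
    have huvz : u = z ∨ v = z := by
      rcases huv with ⟨h1, _⟩ | ⟨h1, _⟩
      · exact Or.inl ((hval u).mp h1)
      · exact Or.inr ((hval v).mp h1)
    rcases h with hnd | hz0 | ⟨c, hc, hcz, him⟩
    · exfalso
      simp only [pdom, Set.mem_setOf_eq, not_not] at hnd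
      rcases huvz with h1 | h1
      · rw [h1, hnd] at hu; exact Option.some_ne_none a hu.symm
      · rw [h1, hnd] at hv; exact Option.some_ne_none b hv.symm
    · rcases huvz with h1 | h1
      · rw [h1, hz0] at hu
        have : a = z := (Option.some_inj.mp hu).symm
        subst this
        exact hedge b fun hb => hab hb.symm
      · rw [h1, hz0] at hv
        have : b = z := (Option.some_inj.mp hv).symm
        subst this
        exact hedge' a hab
    · have hmem : ∀ (x c' : Fin n), α x = some c' → c' = z ∨ c' = c := by
        intro x c' hx
        have := him ⟨x, hx⟩
        simpa using this
      rcases huvz with h1 | h1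
      · rw [h1, hc] at hu
        have : a = c := (Option.some_inj.mp hu).symm
        subst this
        rcases hmem v b hv with hb | hb
        · subst hb; exact hedge' a hcz
        · exact absurd hb.symm hab
      · rw [h1, hc] at hv
        have : b = c := (Option.some_inj.mp hv).symm
        subst this
        rcases hmem u a hu with ha | ha
        · subst ha; exact hedge b hcz
        · exact absurd ha hab
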